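/- A graph G with maximum degree Δ has a proper edge coloring with Δ + 1 colors; equivalently, the edge set of G can be partitioned into at most Δ + 1 matchings. -/

import Mathlib

open Finset

variable {V : Type*}

/-- A matching of a simple graph `G`: a finite set of edges of `G` such that
no two distinct edges share a vertex. -/
def IsMatching (G : SimpleGraph V) (M : Finset (Sym2 V)) : Prop :=
  (∀ e ∈ M, e ∈ G.edgeSet) ∧
  ∀ e ∈ M, ∀ f ∈ M, e ≠ f → ∀ v, v ∈ e → v ∉ f

/-- A `k`-disjoint matching: `k` pairwise edge-disjoint matchings of `G`. -/
def IsKDisjointMatching (G : SimpleGraph V) (k : ℕ)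
    (Ms : Fin k → Finset (Sym2 V)) : Prop :=
  (∀ i, IsMatching G (Ms i)) ∧ Pairwise fun i j => Disjoint (Ms i) (Ms j)

/-- The weight of a set of edges. -/
def mweight (w : Sym2 V → ℕ) (M : Finset (Sym2 V)) : ℕ := ∑ e ∈ M, w e

/-- A proper edge coloring with `k` colors of the edge set `F`:
edges sharing a vertex receive distinct colors. -/
def ProperColoringOn (k : ℕ) (F : Finset (Sym2 V)) (c : Sym2 V → Fin k) : Prop :=
  ∀ e ∈ F, ∀ f ∈ F, e ≠ f → (∃ x, x ∈ e ∧ x ∈ f) → c e ≠ c f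

namespace Vizing

variable {k : ℕ}

lemma getLast_eq_of_eq {l l' : List V} (h : l = l') (hl : l ≠ []) (hl' : l' ≠ []) :
    l.getLast hl = l'.getLast hl' := by subst h; rfl

/-- Color `a` appears on an edge of `F` at vertex `v`. -/
def UsedAt (c : Sym2 V → Fin k) (F : Finset (Sym2 V)) (v : V) (a : Fin k) : Prop :=
  ∃ e ∈ F, v ∈ e ∧ c e = a

lemma not_usedAt_mono {c : Sym2 V → Fin k} {F F' : Finset (Sym2 V)} {v a} (h : F ⊆ F')
    (hn : ¬ UsedAt c F' v a) : ¬ UsedAt c F v a := by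
  rintro ⟨e, he, hv, hc⟩; exact hn ⟨e, h he, hv, hc⟩

lemma proper_mono {c : Sym2 V → Fin k} {F F' : Finset (Sym2 V)} (h : F ⊆ F')
    (hc : ProperColoringOn k F' c) : ProperColoringOn k F c :=
  fun e he f hf hne hsh => hc e (h he) f (h hf) hne hsh

/-- Coloring a (possibly new) edge with a color free at both endpoints keeps properness. -/
lemma proper_update [DecidableEq V] {c : Sym2 V → Fin k} {F : Finset (Sym2 V)} {u v : V}
    {β : Fin k} (hc : ProperColoringOn k F c)
    (hu : ¬ UsedAt c (F.erase s(u, v)) u β) (hv : ¬ UsedAt c (F.erase s(u, v)) v β) :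
    ProperColoringOn k (insert s(u, v) F) (Function.update c s(u, v) β) := by
  intro e he f hf hne hsh
  obtain ⟨w, hwe, hwf⟩ := hsh
  rcases eq_or_ne e s(u, v) with he' | he' <;> rcases eq_or_ne f s(u, v) with hf' | hf'
  · exact absurd (he'.trans hf'.symm) hne
  · subst he'
    have hfF : f ∈ F.erase s(u, v) :=
      Finset.mem_erase.2 ⟨hf', (Finset.mem_insert.1 hf).resolve_left hf'⟩
    rw [Function.update_self, Function.update_of_ne hf']
    rcases Sym2.mem_iff.1 hwe with rfl | rfl
    · exact fun h => hu ⟨f, hfF, hwf, h.symm⟩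
    · exact fun h => hv ⟨f, hfF, hwf, h.symm⟩
  · subst hf'
    have heF : e ∈ F.erase s(u, v) :=
      Finset.mem_erase.2 ⟨he', (Finset.mem_insert.1 he).resolve_left he'⟩
    rw [Function.update_self, Function.update_of_ne he']
    rcases Sym2.mem_iff.1 hwf with rfl | rfl
    · exact fun h => hu ⟨e, heF, hwe, h⟩
    · exact fun h => hv ⟨e, heF, hwe, h⟩
  · rw [Function.update_of_ne he', Function.update_of_ne hf']
    exact hc e ((Finset.mem_insert.1 he).resolve_left he') f
      ((Finset.mem_insert.1 hf).resolve_left hf') hne ⟨w, hwe, hwf⟩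

/-- Reachability from `x` using edges of `S`. -/
def Reach (S : Finset (Sym2 V)) (x u : V) : Prop :=
  Relation.ReflTransGen (fun a b => s(a, b) ∈ S) x u

lemma reach_refl (S : Finset (Sym2 V)) (x : V) : Reach S x x := Relation.ReflTransGen.refl

lemma reach_step {S : Finset (Sym2 V)} {x u v : V} (h : Reach S x u) (he : s(u, v) ∈ S) :
    Reach S x v := h.tail he

lemma reach_eq_of_no_edge {S : Finset (Sym2 V)} {x w : V}
    (h : ∀ e ∈ S, x ∉ e) (hr : Reach S x w) : w = x := by
  rcases hr.cases_head with rfl | ⟨b, hb, _⟩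
  · rfl
  · exact absurd (Sym2.mem_mk_left x b) (h _ hb)

lemma reach_erase [DecidableEq V] {S : Finset (Sym2 V)} {x x' w : V}
    (huniq : ∀ f ∈ S, x ∈ f → f = s(x, x')) (hr : Reach S x w) :
    w = x ∨ Reach (S.erase s(x, x')) x' w := by
  induction hr with
  | refl => exact Or.inl rfl
  | @tail b w hxb hbw ih =>
    rcases ih with rfl | ih
    · have := huniq _ hbw (Sym2.mem_mk_left b w)
      rw [Sym2.eq_iff] at this
      rcases this with ⟨-, rfl⟩ | ⟨rfl, rfl⟩
      · exact Or.inr Relation.ReflTransGen.refl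
      · exact Or.inl rfl
    · rcases eq_or_ne s(b, w) s(x, x') with h | h
      · rw [Sym2.eq_iff] at h
        rcases h with ⟨rfl, rfl⟩ | ⟨rfl, rfl⟩
        · exact Or.inr Relation.ReflTransGen.refl
        · exact Or.inl rfl
      · exact Or.inr (ih.tail (Finset.mem_erase.2 ⟨h, hbw⟩))

/-- Dichotomy: in a graph of max degree ≤ 2, from a vertex `x` of degree ≤ 1 one cannot
reach two distinct other vertices of degree ≤ 1. -/
lemma chain_dichotomy [DecidableEq V] :
    ∀ (n : ℕ) (S : Finset (Sym2 V)) (x u v : V), S.card = n →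
    (∀ e ∈ S, ¬ e.IsDiag) →
    (∀ w, (S.filter (fun e => w ∈ e)).card ≤ 2) →
    x ≠ u → x ≠ v → u ≠ v →
    (S.filter (fun e => x ∈ e)).card ≤ 1 →
    (S.filter (fun e => u ∈ e)).card ≤ 1 →
    (S.filter (fun e => v ∈ e)).card ≤ 1 →
    ¬ (Reach S x u ∧ Reach S x v) := by
  intro n
  induction n using Nat.strong_induction_on with
  | _ n ih =>
    intro S x u v hcard hdiag hdeg2 hxu hxv huv hdx hdu hdv ⟨hru, hrv⟩
    rcases Finset.eq_empty_or_nonempty (S.filter (fun e => x ∈ e)) with hemp | ⟨e, he⟩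
    · have hno : ∀ e ∈ S, x ∉ e := by
        intro e heS hx
        have hmem : e ∈ S.filter (fun e => x ∈ e) := by
          rw [Finset.mem_filter]; exact ⟨heS, hx⟩
        rw [hemp] at hmem
        exact absurd hmem (Finset.notMem_empty e)
      exact hxu (reach_eq_of_no_edge hno hru).symm
    · obtain ⟨heS, hxe⟩ := Finset.mem_filter.1 he
      obtain ⟨x', rfl⟩ := Sym2.mem_iff_exists.1 hxe
      have hxx' : x ≠ x' := fun h => hdiag _ heS (by simp [h])
      have huniq : ∀ f ∈ S, x ∈ f → f = s(x, x') := by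
        intro f hf hxf
        exact Finset.card_le_one.1 hdx f (Finset.mem_filter.2 ⟨hf, hxf⟩) _ he
      set S' := S.erase s(x, x') with hS'
      have hcard' : S'.card < n := by
        rw [← hcard]; exact Finset.card_erase_lt_of_mem heS
      rcases eq_or_ne x' u with rfl | hx'u
      · -- no S'-edges at u = x'
        have hno : ∀ f ∈ S', x' ∉ f := by
          intro f hf hx'f
          obtain ⟨hfne, hfS⟩ := Finset.mem_erase.1 hf
          exact hfne (Finset.card_le_one.1 hdu f (Finset.mem_filter.2 ⟨hfS, hx'f⟩) _
            (Finset.mem_filter.2 ⟨heS, Sym2.mem_mk_right x x'⟩))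
        rcases reach_erase huniq hrv with rfl | h
        · exact hxv rfl
        · exact huv (reach_eq_of_no_edge hno h).symm
      rcases eq_or_ne x' v with rfl | hx'v
      · have hno : ∀ f ∈ S', x' ∉ f := by
          intro f hf hx'f
          obtain ⟨hfne, hfS⟩ := Finset.mem_erase.1 hf
          exact hfne (Finset.card_le_one.1 hdv f (Finset.mem_filter.2 ⟨hfS, hx'f⟩) _
            (Finset.mem_filter.2 ⟨heS, Sym2.mem_mk_right x x'⟩))
        rcases reach_erase huniq hru with rfl | h
        · exact hxu rfl
        · exact huv (reach_eq_of_no_edge hno h)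
      · -- apply IH with x'
        have hdx' : (S'.filter (fun e => x' ∈ e)).card ≤ 1 := by
          have : S'.filter (fun e => x' ∈ e) = (S.filter (fun e => x' ∈ e)).erase s(x, x') := by
            rw [hS', Finset.filter_erase]
          rw [this, Finset.card_erase_of_mem
            (Finset.mem_filter.2 ⟨heS, Sym2.mem_mk_right x x'⟩)]
          have := hdeg2 x'
          omega
        have hsub : ∀ w : V, S'.filter (fun e => w ∈ e) ⊆ S.filter (fun e => w ∈ e) :=
          fun w => Finset.filter_subset_filter _ (Finset.erase_subset _ _)
        have := ih S'.card hcard' S' x' u v rfl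
          (fun e he => hdiag e (Finset.mem_erase.1 he).2)
          (fun w => le_trans (Finset.card_le_card (hsub w)) (hdeg2 w))
          hx'u hx'v huv hdx'
          (le_trans (Finset.card_le_card (hsub u)) hdu)
          (le_trans (Finset.card_le_card (hsub v)) hdv)
        apply this
        constructor
        · rcases reach_erase huniq hru with rfl | h
          · exact absurd rfl hxu
          · exact h
        · rcases reach_erase huniq hrv with rfl | h
          · exact absurd rfl hxv
          · exact h

section Swap

variable [DecidableEq V] {c : Sym2 V → Fin k} {F : Finset (Sym2 V)} {α β : Fin k} {x : V}

/-- The edges colored `α` or `β`. -/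
def abEdges (c : Sym2 V → Fin k) (α β : Fin k) (F : Finset (Sym2 V)) : Finset (Sym2 V) :=
  F.filter (fun e => c e = α ∨ c e = β)

attribute [local instance] Classical.propDecidable

/-- The αβ-chain component of `x`: edges of `S` touching a vertex reachable from `x`. -/
noncomputable def chainSet (S : Finset (Sym2 V)) (x : V) : Finset (Sym2 V) :=
  S.filter (fun e => ∃ u ∈ e, Reach S x u)

/-- Swapping colors `α` and `β` on the chain component of `x`. -/
noncomputable def swapped (c : Sym2 V → Fin k) (α β : Fin k) (F : Finset (Sym2 V)) (x : V) :
    Sym2 V → Fin k :=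
  fun e => if e ∈ chainSet (abEdges c α β F) x then Equiv.swap α β (c e) else c e

lemma chainSet_subset {S : Finset (Sym2 V)} {x : V} : chainSet S x ⊆ S := by
  unfold chainSet; exact Finset.filter_subset _ _

lemma mem_chainSet {S : Finset (Sym2 V)} {x : V} {e : Sym2 V} :
    e ∈ chainSet S x ↔ e ∈ S ∧ ∃ u ∈ e, Reach S x u := by
  unfold chainSet; rw [Finset.mem_filter]

/-- If an edge of the chain shares a vertex `w` with an edge of `S`, that edge is in the chain. -/
lemma mem_chainSet_of_shares {S : Finset (Sym2 V)} {x : V} {e f : Sym2 V} {w : V}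
    (he : e ∈ chainSet S x) (hf : f ∈ S) (hwe : w ∈ e) (hwf : w ∈ f) :
    f ∈ chainSet S x := by
  obtain ⟨heS, u, hue, hru⟩ := mem_chainSet.1 he
  have hrw : Reach S x w := by
    rcases eq_or_ne u w with rfl | hne
    · exact hru
    · refine hru.tail ?_
      obtain ⟨u', rfl⟩ := Sym2.mem_iff_exists.1 hue
      rcases Sym2.mem_iff.1 hwe with rfl | rfl
      · exact absurd rfl hne
      · exact heS
  exact mem_chainSet.2 ⟨hf, w, hwf, hrw⟩

lemma swapped_eq_of_not_mem {e : Sym2 V} (h : e ∉ chainSet (abEdges c α β F) x) :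
    swapped c α β F x e = c e := if_neg h

lemma mem_abEdges {e : Sym2 V} : e ∈ abEdges c α β F ↔ e ∈ F ∧ (c e = α ∨ c e = β) :=
  Finset.mem_filter

/-- Any αβ-edge at `x` itself is in the chain component of `x`. -/
lemma mem_chainSet_of_mem_x {e : Sym2 V} (he : e ∈ abEdges c α β F) (hxe : x ∈ e) :
    e ∈ chainSet (abEdges c α β F) x :=
  mem_chainSet.2 ⟨he, x, hxe, Relation.ReflTransGen.refl⟩

lemma swapped_proper (hc : ProperColoringOn k F c) :
    ProperColoringOn k F (swapped c α β F x) := by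
  intro e he f hf hne hsh
  obtain ⟨w, hwe, hwf⟩ := hsh
  set S := abEdges c α β F with hS
  unfold swapped
  by_cases heC : e ∈ chainSet S x <;> by_cases hfC : f ∈ chainSet S x
  · rw [if_pos heC, if_pos hfC]
    intro h
    exact hc e he f hf hne ⟨w, hwe, hwf⟩ ((Equiv.swap α β).injective h)
  · rw [if_pos heC, if_neg hfC]
    have hfS : f ∉ S := fun h => hfC (mem_chainSet_of_shares heC h hwe hwf)
    have hcf : c f ≠ α ∧ c f ≠ β := by
      constructor <;> intro h <;> exact hfS (mem_abEdges.2 ⟨hf, by simp [h]⟩)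
    have hce : c e = α ∨ c e = β := (mem_abEdges.1 (chainSet_subset heC)).2
    rcases hce with h | h <;> rw [h] <;> simp [Equiv.swap_apply_left, Equiv.swap_apply_right]
    · exact fun hh => hcf.2 hh.symm
    · exact fun hh => hcf.1 hh.symm
  · rw [if_neg heC, if_pos hfC]
    have heS : e ∉ S := fun h => heC (mem_chainSet_of_shares hfC h hwf hwe)
    have hce : c e ≠ α ∧ c e ≠ β := by
      constructor <;> intro h <;> exact heS (mem_abEdges.2 ⟨he, by simp [h]⟩)
    have hcf : c f = α ∨ c f = β := (mem_abEdges.1 (chainSet_subset hfC)).2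
    rcases hcf with h | h <;> rw [h] <;>
      simp [Equiv.swap_apply_left, Equiv.swap_apply_right]
    · exact hce.2
    · exact hce.1
  · rw [if_neg heC, if_neg hfC]
    exact hc e he f hf hne ⟨w, hwe, hwf⟩

/-- If `v` is not reachable, its used colors are unchanged by the swap. -/
lemma swapped_usedAt_of_not_reach {v : V} (hv : ¬ Reach (abEdges c α β F) x v) (a : Fin k) :
    UsedAt (swapped c α β F x) F v a ↔ UsedAt c F v a := by
  have key : ∀ e ∈ F, v ∈ e → swapped c α β F x e = c e := by
    intro e he hve
    apply swapped_eq_of_not_mem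
    intro hC
    obtain ⟨heS, u, hue, hru⟩ := mem_chainSet.1 hC
    apply hv
    rcases eq_or_ne u v with rfl | hne
    · exact hru
    · refine hru.tail ?_
      obtain ⟨u', rfl⟩ := Sym2.mem_iff_exists.1 hue
      rcases Sym2.mem_iff.1 hve with rfl | rfl
      · exact absurd rfl hne
      · exact heS
  constructor <;> rintro ⟨e, he, hve, hce⟩ <;> exact ⟨e, he, hve, by rw [← hce, key e he hve]⟩

/-- Colors other than `α`, `β` are used at `v` after the swap iff before. -/
lemma swapped_usedAt_other {v : V} {γ : Fin k} (hγα : γ ≠ α) (hγβ : γ ≠ β) :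
    UsedAt (swapped c α β F x) F v γ ↔ UsedAt c F v γ := by
  have key : ∀ e, (swapped c α β F x e = γ ↔ c e = γ) := by
    intro e
    unfold swapped
    split
    · rename_i hC
      have hce : c e = α ∨ c e = β := (mem_abEdges.1 (chainSet_subset hC)).2
      constructor <;> intro h
      · exfalso
        rcases hce with h' | h' <;> rw [h'] at h <;>
          simp [Equiv.swap_apply_left, Equiv.swap_apply_right] at h
        · exact hγβ h.symm
        · exact hγα h.symm
      · rcases hce with h' | h' <;> rw [h] at h' <;> [exact absurd h' hγα; exact absurd h' hγβ]
    · exact Iff.rfl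
  constructor <;> rintro ⟨e, he, hve, hce⟩
  · exact ⟨e, he, hve, (key e).1 hce⟩
  · exact ⟨e, he, hve, (key e).2 hce⟩

end Swap

/-- The fan condition along a list of neighbors of `x`. -/
def IsFanChain (c : Sym2 V → Fin k) (F : Finset (Sym2 V)) (x : V) : List V → Prop
  | [] => True
  | [_] => True
  | a :: b :: t => s(x, b) ∈ F ∧ ¬ UsedAt c F a (c s(x, b)) ∧ IsFanChain c F x (b :: t)

lemma sym2_ne_of_ne {x a b : V} (hax : a ≠ x) (hab : a ≠ b) : s(x, a) ≠ s(x, b) := by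
  intro h
  rw [Sym2.eq_iff] at h
  rcases h with ⟨-, h⟩ | ⟨h1, h2⟩
  · exact hab h
  · exact hax h2

lemma isFanChain_nil {c : Sym2 V → Fin k} {F x} : IsFanChain c F x [] := trivial
lemma isFanChain_singleton {c : Sym2 V → Fin k} {F x y} : IsFanChain c F x [y] := trivial

lemma isFanChain_cons_cons {c : Sym2 V → Fin k} {F x} {a b : V} {t : List V} :
    IsFanChain c F x (a :: b :: t) ↔
      s(x, b) ∈ F ∧ ¬ UsedAt c F a (c s(x, b)) ∧ IsFanChain c F x (b :: t) := Iff.rfl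

lemma IsFanChain.tail {c : Sym2 V → Fin k} {F : Finset (Sym2 V)} {x : V} :
    ∀ {l : List V} {a : V}, IsFanChain c F x (a :: l) → IsFanChain c F x l
  | [], _, _ => trivial
  | _ :: _, _, h => (isFanChain_cons_cons.1 h).2.2

lemma IsFanChain.suffix {c : Sym2 V → Fin k} {F : Finset (Sym2 V)} {x : V} :
    ∀ {l₁ l₂ : List V}, IsFanChain c F x (l₁ ++ l₂) → IsFanChain c F x l₂
  | [], _, h => h
  | _ :: t, l₂, h => IsFanChain.suffix (l₁ := t) h.tail


/-- A prefix of a fan chain is a fan chain. -/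
lemma IsFanChain.prefix {c : Sym2 V → Fin k} {F x} :
    ∀ {l₁ l₂ : List V}, IsFanChain c F x (l₁ ++ l₂) → IsFanChain c F x l₁
  | [], _, _ => trivial
  | [_], _, _ => trivial
  | a :: b :: t, l₂, h => by
    rw [List.cons_append, List.cons_append] at h
    obtain ⟨h1, h2, h3⟩ := isFanChain_cons_cons.1 h
    exact isFanChain_cons_cons.2 ⟨h1, h2, IsFanChain.prefix (l₁ := b :: t) (l₂ := l₂)
      (by rwa [List.cons_append])⟩

/-- Gluing fan chains at a junction. -/
lemma IsFanChain.append_mid {c : Sym2 V → Fin k} {F x} {b : V} {l₂ : List V} :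
    ∀ {l₁ : List V} (h₁ : l₁ ≠ []), IsFanChain c F x l₁ → IsFanChain c F x (b :: l₂) →
    s(x, b) ∈ F → ¬ UsedAt c F (l₁.getLast h₁) (c s(x, b)) →
    IsFanChain c F x (l₁ ++ b :: l₂)
  | [], h₁, _, _, _, _ => absurd rfl h₁
  | [a], _, _, h2, h3, h4 => by
    rw [List.singleton_append]
    exact isFanChain_cons_cons.2 ⟨h3, by simpa using h4, h2⟩
  | a :: a' :: t, _, h1, h2, h3, h4 => by
    obtain ⟨g1, g2, g3⟩ := isFanChain_cons_cons.1 h1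
    have tail : IsFanChain c F x ((a' :: t) ++ b :: l₂) :=
      IsFanChain.append_mid (by simp) g3 h2 h3 (by simpa [List.getLast] using h4)
    exact isFanChain_cons_cons.2 ⟨g1, g2, tail⟩

/-- The junction property of a split fan chain. -/
lemma IsFanChain.junction {c : Sym2 V → Fin k} {F x} {b : V} {l₂ : List V} :
    ∀ {l₁ : List V} (h₁ : l₁ ≠ []), IsFanChain c F x (l₁ ++ b :: l₂) →
    s(x, b) ∈ F ∧ ¬ UsedAt c F (l₁.getLast h₁) (c s(x, b))
  | [], h₁, _ => absurd rfl h₁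
  | [a], _, h => by
    rw [List.singleton_append] at h
    obtain ⟨h1, h2, _⟩ := isFanChain_cons_cons.1 h
    exact ⟨h1, by simpa using h2⟩
  | a :: a' :: t, _, h => by
    rw [List.cons_append] at h
    obtain ⟨h1, h2, h3⟩ := isFanChain_cons_cons.1 h
    have := IsFanChain.junction (l₁ := a' :: t) (by simp) (by rwa [List.cons_append])
    exact ⟨this.1, by simpa [List.getLast] using this.2⟩

/-- Transfer a fan chain to a new coloring/edge set. -/
lemma IsFanChain.transfer {c c' : Sym2 V → Fin k} {F F' : Finset (Sym2 V)} {x : V} :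
    ∀ {l : List V}, IsFanChain c F x l →
    (∀ a ∈ l, ∀ b ∈ l.tail, s(x, b) ∈ F → ¬ UsedAt c F a (c s(x, b)) →
      s(x, b) ∈ F' ∧ c' s(x, b) = c s(x, b) ∧ ¬ UsedAt c' F' a (c s(x, b))) →
    IsFanChain c' F' x l
  | [], _, _ => trivial
  | [_], _, _ => trivial
  | a :: b :: t, h, htr => by
    obtain ⟨h1, h2, h3⟩ := isFanChain_cons_cons.1 h
    obtain ⟨g1, g2, g3⟩ := htr a (by simp) b (by simp) h1 h2
    refine isFanChain_cons_cons.2 ⟨g1, by rw [g2]; exact g3, ?_⟩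
    exact IsFanChain.transfer h3 (fun a' ha' b' hb' hm hu =>
      htr a' (List.mem_cons_of_mem _ ha') b' (List.mem_cons_of_mem _ hb') hm hu)

/-- Rotating a fan: if `β` is free at `x` and at the last vertex of the fan, the uncolored
edge `s(x,y)` can be colored. -/
lemma rotate [DecidableEq V] {x : V} {β : Fin k} :
    ∀ (t : List V) (y : V) (c : Sym2 V → Fin k) (F : Finset (Sym2 V)),
    IsFanChain c F x (y :: t) → (y :: t).Nodup → (∀ z ∈ y :: t, z ≠ x) →
    s(x, y) ∉ F → ProperColoringOn k F c →
    ¬ UsedAt c F x β → ¬ UsedAt c F ((y :: t).getLast (by simp)) β →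
    ∃ c', ProperColoringOn k (insert s(x, y) F) c' := by
  intro t
  induction t with
  | nil =>
    intro y c F _ _ _ hxy hc hβx hβy
    refine ⟨Function.update c s(x, y) β, proper_update hc ?_ ?_⟩
    · exact not_usedAt_mono (Finset.erase_subset _ _) hβx
    · exact not_usedAt_mono (Finset.erase_subset _ _) (by simpa using hβy)
  | cons y₁ t ih =>
    intro y c F hchain hnd hne hxy hc hβx hβlast
    obtain ⟨h1, h2, h3⟩ := isFanChain_cons_cons.1 hchain
    set γ := c s(x, y₁) with hγ
    have hyx : y ≠ x := hne y (by simp)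
    have hy₁x : y₁ ≠ x := hne y₁ (by simp)
    have hynotin : y ∉ y₁ :: t := (List.nodup_cons.1 hnd).1
    have hyy₁ : y ≠ y₁ := by
      intro h; exact hynotin (h ▸ List.mem_cons_self)
    have hexy : s(x, y) ≠ s(x, y₁) := sym2_ne_of_ne hyx hyy₁
    -- new coloring: move γ to edge s(x,y)
    set c₁ := Function.update c s(x, y) γ with hc₁
    set F₁ := insert s(x, y) (F.erase s(x, y₁)) with hF₁
    have hprop₁ : ProperColoringOn k F₁ c₁ := by
      apply proper_update (proper_mono (Finset.erase_subset _ _) hc)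
      · -- γ not used at x on (F.erase s(x,y₁)).erase s(x,y)
        rintro ⟨f, hf, hxf, hcf⟩
        obtain ⟨hfne, hf'⟩ := Finset.mem_erase.1 hf
        obtain ⟨hfne₁, hfF⟩ := Finset.mem_erase.1 hf'
        exact hc f hfF s(x, y₁) h1 hfne₁ ⟨x, hxf, Sym2.mem_mk_left x y₁⟩ (by rw [hcf])
      · rintro ⟨f, hf, hyf, hcf⟩
        obtain ⟨-, hf'⟩ := Finset.mem_erase.1 hf
        obtain ⟨-, hfF⟩ := Finset.mem_erase.1 hf'
        exact h2 ⟨f, hfF, hyf, hcf⟩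
    have hxy₁F₁ : s(x, y₁) ∉ F₁ := by
      rw [hF₁, Finset.mem_insert]
      push_neg
      exact ⟨hexy.symm, Finset.notMem_erase _ _⟩
    -- s(x,y) not touching members of y₁ :: t
    have hnotin : ∀ z ∈ y₁ :: t, z ∉ s(x, y) := by
      intro z hz
      have hzx : z ≠ x := hne z (List.mem_cons_of_mem _ hz)
      have hzy : z ≠ y := fun h => hynotin (h ▸ hz)
      simp [Sym2.mem_iff, hzx, hzy]
    have hnd₁ : (y₁ :: t).Nodup := (List.nodup_cons.1 hnd).2
    have hchain₁ : IsFanChain c₁ F₁ x (y₁ :: t) := by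
      apply h3.transfer
      intro a ha b hb hm hu
      have hbmem : b ∈ y₁ :: t := List.mem_cons_of_mem _ hb
      have hbx : b ≠ x := hne b (List.mem_cons_of_mem _ hbmem)
      have hbz : b ≠ y := fun h => hynotin (h ▸ hbmem)
      have hbne : s(x, b) ≠ s(x, y) := sym2_ne_of_ne hbx hbz
      have hby₁ : b ≠ y₁ := fun h => (List.nodup_cons.1 hnd₁).1 (h ▸ hb)
      refine ⟨?_, ?_, ?_⟩
      · rw [hF₁, Finset.mem_insert]
        exact Or.inr (Finset.mem_erase.2 ⟨sym2_ne_of_ne hbx hby₁, hm⟩)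
      · rw [hc₁, Function.update_of_ne hbne]
      · rintro ⟨f, hf, haf, hcf⟩
        rw [hF₁, Finset.mem_insert] at hf
        rcases hf with rfl | hf
        · exact hnotin a ha haf
        · have hfF : f ∈ F := Finset.mem_of_mem_erase hf
          have hfne : f ≠ s(x, y) := fun h => hxy (h ▸ hfF)
          rw [hc₁, Function.update_of_ne hfne] at hcf
          exact hu ⟨f, hfF, haf, hcf⟩
    have hne₁ : ∀ z ∈ y₁ :: t, z ≠ x := fun z hz => hne z (List.mem_cons_of_mem _ hz)
    have hβx₁ : ¬ UsedAt c₁ F₁ x β := by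
      rintro ⟨f, hf, hxf, hcf⟩
      rw [hF₁, Finset.mem_insert] at hf
      rcases hf with rfl | hf
      · rw [hc₁, Function.update_self] at hcf
        exact hβx ⟨s(x, y₁), h1, Sym2.mem_mk_left x y₁, hγ ▸ hcf⟩
      · have hfF : f ∈ F := Finset.mem_of_mem_erase hf
        have hfne : f ≠ s(x, y) := fun h => hxy (h ▸ hfF)
        rw [hc₁, Function.update_of_ne hfne] at hcf
        exact hβx ⟨f, hfF, hxf, hcf⟩
    have hlast₁ : ((y₁ :: t).getLast (by simp)) = ((y :: y₁ :: t).getLast (by simp)) := by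
      simp [List.getLast]
    have hβlast₁ : ¬ UsedAt c₁ F₁ ((y₁ :: t).getLast (by simp)) β := by
      set L := (y₁ :: t).getLast (by simp) with hL
      have hLmem : L ∈ y₁ :: t := List.getLast_mem _
      rintro ⟨f, hf, hLf, hcf⟩
      rw [hF₁, Finset.mem_insert] at hf
      rcases hf with rfl | hf
      · exact hnotin L hLmem hLf
      · have hfF : f ∈ F := Finset.mem_of_mem_erase hf
        have hfne : f ≠ s(x, y) := fun h => hxy (h ▸ hfF)
        rw [hc₁, Function.update_of_ne hfne] at hcf
        exact hβlast (by rw [← hlast₁]; exact ⟨f, hfF, hLf, hcf⟩)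
    obtain ⟨c', hc'⟩ := ih y₁ c₁ F₁ hchain₁ hnd₁ hne₁ hxy₁F₁ hprop₁ hβx₁ hβlast₁
    refine ⟨c', ?_⟩
    have : insert s(x, y₁) F₁ = insert s(x, y) F := by
      rw [hF₁, Finset.insert_comm, Finset.insert_erase h1]
    rwa [this] at hc'

section Extend
variable [Fintype V] [DecidableEq V] (G : SimpleGraph V) [DecidableRel G.Adj]

/-- A color is free at every vertex. -/
lemma exists_free {F : Finset (Sym2 V)} (hF : F ⊆ G.edgeFinset)
    (c : Sym2 V → Fin (G.maxDegree + 1)) (v : V) :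
    ∃ a : Fin (G.maxDegree + 1), ¬ UsedAt c F v a := by
  by_contra h
  push_neg at h
  have hsub : F.filter (fun e => v ∈ e) ⊆ G.incidenceFinset v := by
    intro f hf
    obtain ⟨hfF, hvf⟩ := Finset.mem_filter.1 hf
    rw [SimpleGraph.mem_incidenceFinset]
    exact ⟨SimpleGraph.mem_edgeFinset.1 (hF hfF), hvf⟩
  have hcard : ((F.filter (fun e => v ∈ e)).image c).card ≤ G.maxDegree := by
    calc ((F.filter (fun e => v ∈ e)).image c).card ≤ (F.filter (fun e => v ∈ e)).card :=
          Finset.card_image_le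
    _ ≤ (G.incidenceFinset v).card := Finset.card_le_card hsub
    _ = G.degree v := G.card_incidenceFinset_eq_degree v
    _ ≤ G.maxDegree := G.degree_le_maxDegree v
  have huniv : (Finset.univ : Finset (Fin (G.maxDegree + 1))) ⊆
      (F.filter (fun e => v ∈ e)).image c := by
    intro a _
    obtain ⟨e, he, hve, hce⟩ := h a
    exact Finset.mem_image.2 ⟨e, Finset.mem_filter.2 ⟨he, hve⟩, hce⟩
  have := Finset.card_le_card huniv
  rw [Finset.card_univ, Fintype.card_fin] at this
  omega

/-- The key extension step of Vizing's theorem. -/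
lemma extend {F : Finset (Sym2 V)} (hF : F ⊆ G.edgeFinset)
    {c : Sym2 V → Fin (G.maxDegree + 1)} (hc : ProperColoringOn (G.maxDegree + 1) F c)
    {e : Sym2 V} (he : e ∈ G.edgeFinset) (heF : e ∉ F) :
    ∃ c', ProperColoringOn (G.maxDegree + 1) (insert e F) c' := by
  classical
  induction e using Sym2.ind with
  | _ x y₀ =>
  have hadj₀ : G.Adj x y₀ := by rwa [SimpleGraph.mem_edgeFinset, SimpleGraph.mem_edgeSet] at he
  -- maximal fan starting at y₀
  set P : ℕ → Prop := fun n => ∃ t : List V, IsFanChain c F x (y₀ :: t) ∧ (y₀ :: t).Nodup ∧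
    (∀ z ∈ y₀ :: t, G.Adj x z) ∧ (y₀ :: t).length = n with hP
  have hP1 : P 1 := ⟨[], isFanChain_singleton, by simp, by simpa using hadj₀, rfl⟩
  have hcardpos : 1 ≤ Fintype.card V := Fintype.card_pos_iff.2 ⟨x⟩
  set n := Nat.findGreatest P (Fintype.card V) with hn
  have hPn : P n := Nat.findGreatest_spec hcardpos hP1
  obtain ⟨t, hchain, hnd, hadjall, hlen⟩ := hPn
  have hnex : ∀ z ∈ y₀ :: t, z ≠ x := fun z hz => (hadjall z hz).ne'
  set yl := (y₀ :: t).getLast (by simp) with hyl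
  obtain ⟨β, hβyl⟩ := exists_free G hF c yl
  by_cases hβx : UsedAt c F x β
  swap
  · exact rotate t y₀ c F hchain hnd hnex heF hc hβx hβyl
  -- hard case
  obtain ⟨α, hαx⟩ := exists_free G hF c x
  have hαβ : α ≠ β := fun h => hαx (h ▸ hβx)
  obtain ⟨e', he'F, hxe', hce'⟩ := hβx
  obtain ⟨z, rfl⟩ := Sym2.mem_iff_exists.1 hxe'
  have hzx : z ≠ x := by
    intro h
    exact G.not_isDiag_of_mem_edgeSet (SimpleGraph.mem_edgeFinset.1 (hF he'F)) (by simp [h])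
  have hzadj : G.Adj x z := by
    have := SimpleGraph.mem_edgeFinset.1 (hF he'F)
    rwa [SimpleGraph.mem_edgeSet] at this
  have hzy₀ : z ≠ y₀ := by
    rintro rfl
    exact heF he'F
  -- z is in the fan, by maximality
  have hzmem : z ∈ y₀ :: t := by
    by_contra hzm
    have hchain' : IsFanChain c F x ((y₀ :: t) ++ [z]) :=
      IsFanChain.append_mid (by simp) hchain isFanChain_singleton he'F (by rwa [hce'])
    have hnd' : ((y₀ :: t) ++ [z]).Nodup := by
      rw [List.nodup_append]
      exact ⟨hnd, List.nodup_singleton z, fun a ha b hb hab => hzm (by rw [List.mem_singleton] at hb; rw [← hb, ← hab]; exact ha)⟩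
    have hlen0 : t.length + 1 = n := by simpa using hlen
    have hlen' : ((y₀ :: t) ++ [z]).length = n + 1 := by simp; omega
    have hP' : P (n + 1) := by
      obtain ⟨t', ht'⟩ : ∃ t', (y₀ :: t) ++ [z] = y₀ :: t' := ⟨t ++ [z], by simp⟩
      refine ⟨t', ?_, ?_, ?_, ?_⟩
      · rwa [← ht']
      · rwa [← ht']
      · rw [← ht']
        intro w hw
        rcases List.mem_append.1 hw with hw | hw
        · exact hadjall w hw
        · rw [List.mem_singleton.1 hw]; exact hzadj
      · rw [← ht', hlen']
    have hbound : n + 1 ≤ Fintype.card V := by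
      have : ((y₀ :: t) ++ [z]).Nodup := hnd'
      have := this.length_le_card
      rwa [hlen'] at this
    have := Nat.le_findGreatest hbound hP'
    omega
  -- split the fan at z
  obtain ⟨l₁, l₂, heq⟩ := List.append_of_mem hzmem
  have hl₁ne : l₁ ≠ [] := by
    rintro rfl
    rw [List.nil_append] at heq
    injection heq with h1 h2
    exact hzy₀ h1.symm
  have hchainS : IsFanChain c F x (l₁ ++ z :: l₂) := heq ▸ hchain
  have hndS : (l₁ ++ z :: l₂).Nodup := heq ▸ hnd
  obtain ⟨hndl₁, hndzl₂, hdisj⟩ := List.nodup_append.1 hndS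
  obtain ⟨hxzF, hβw⟩ := IsFanChain.junction hl₁ne hchainS
  rw [hce'] at hβw
  set w := l₁.getLast hl₁ne with hw
  have hwmem : w ∈ l₁ := List.getLast_mem hl₁ne
  have hylmem : yl ∈ z :: l₂ := by
    have h1 : yl = (z :: l₂).getLast (by simp) := by
      rw [hyl]
      exact (getLast_eq_of_eq heq (by simp) (by simp)).trans
        (List.getLast_append_right (l := l₁) (by simp))
    rw [h1]
    exact List.getLast_mem _
  have hwyl : w ≠ yl := fun h => hdisj w hwmem yl hylmem h
  have hxw : x ≠ w := (hnex w (heq ▸ (List.mem_append.2 (Or.inl hwmem)))).symm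
  have hxyl : x ≠ yl := (hnex yl (List.getLast_mem _)).symm
  -- the αβ-subgraph
  set S := abEdges c α β F with hS
  have he'S : s(x, z) ∈ S := mem_abEdges.2 ⟨he'F, Or.inr hce'⟩
  have he'C : s(x, z) ∈ chainSet S x := mem_chainSet_of_mem_x he'S (Sym2.mem_mk_left x z)
  have hSsub : S ⊆ F := fun f hf => (mem_abEdges.1 hf).1
  have hdiagS : ∀ f ∈ S, ¬ f.IsDiag := fun f hf =>
    G.not_isDiag_of_mem_edgeSet (SimpleGraph.mem_edgeFinset.1 (hF (hSsub hf)))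
  -- degree bounds in S
  have hcol_le_one : ∀ (v : V) (δ : Fin (G.maxDegree + 1)),
      (F.filter (fun f => v ∈ f ∧ c f = δ)).card ≤ 1 := by
    intro v δ
    rw [Finset.card_le_one]
    intro f hf g hg
    obtain ⟨hfF, hvf, hcf⟩ := Finset.mem_filter.1 hf
    obtain ⟨hgF, hvg, hcg⟩ := Finset.mem_filter.1 hg
    by_contra hne
    exact hc f hfF g hgF hne ⟨v, hvf, hvg⟩ (hcf.trans hcg.symm)
  have hdeg2 : ∀ v : V, (S.filter (fun f => v ∈ f)).card ≤ 2 := by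
    intro v
    have hsub : S.filter (fun f => v ∈ f) ⊆
        (F.filter (fun f => v ∈ f ∧ c f = α)) ∪ (F.filter (fun f => v ∈ f ∧ c f = β)) := by
      intro f hf
      obtain ⟨hfS, hvf⟩ := Finset.mem_filter.1 hf
      obtain ⟨hfF, hcf⟩ := mem_abEdges.1 hfS
      rcases hcf with h | h
      · exact Finset.mem_union_left _ (Finset.mem_filter.2 ⟨hfF, hvf, h⟩)
      · exact Finset.mem_union_right _ (Finset.mem_filter.2 ⟨hfF, hvf, h⟩)
    calc (S.filter (fun f => v ∈ f)).card ≤ _ := Finset.card_le_card hsub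
      _ ≤ _ := Finset.card_union_le _ _
      _ ≤ 2 := by
        have := hcol_le_one v α
        have := hcol_le_one v β
        omega
  have hdeg1 : ∀ v : V, (¬ UsedAt c F v α ∨ ¬ UsedAt c F v β) →
      (S.filter (fun f => v ∈ f)).card ≤ 1 := by
    intro v hv
    rcases hv with hv | hv
    · refine le_trans (Finset.card_le_card ?_) (hcol_le_one v β)
      intro f hf
      obtain ⟨hfS, hvf⟩ := Finset.mem_filter.1 hf
      obtain ⟨hfF, hcf⟩ := mem_abEdges.1 hfS
      rcases hcf with h | h
      · exact absurd ⟨f, hfF, hvf, h⟩ hv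
      · exact Finset.mem_filter.2 ⟨hfF, hvf, h⟩
    · refine le_trans (Finset.card_le_card ?_) (hcol_le_one v α)
      intro f hf
      obtain ⟨hfS, hvf⟩ := Finset.mem_filter.1 hf
      obtain ⟨hfF, hcf⟩ := mem_abEdges.1 hfS
      rcases hcf with h | h
      · exact Finset.mem_filter.2 ⟨hfF, hvf, h⟩
      · exact absurd ⟨f, hfF, hvf, h⟩ hv
  have hdich := chain_dichotomy S.card S x w yl rfl hdiagS hdeg2 hxw hxyl hwyl
    (hdeg1 x (Or.inl hαx)) (hdeg1 w (Or.inr hβw)) (hdeg1 yl (Or.inr hβyl))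
  -- the swapped coloring
  set c₁ := swapped c α β F x with hc₁
  have hprop₁ : ProperColoringOn (G.maxDegree + 1) F c₁ := swapped_proper hc
  have hβx₁ : ¬ UsedAt c₁ F x β := by
    rintro ⟨f, hfF, hxf, hcf⟩
    by_cases hfC : f ∈ chainSet S x
    · obtain ⟨hfF', hcol⟩ := mem_abEdges.1 (chainSet_subset hfC)
      rcases hcol with h | h
      · exact hαx ⟨f, hfF, hxf, h⟩
      · rw [hc₁] at hcf
        unfold swapped at hcf
        rw [if_pos hfC, h, Equiv.swap_apply_right] at hcf
        exact hαβ hcf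
    · rw [hc₁, swapped_eq_of_not_mem hfC] at hcf
      exact hfC (mem_chainSet_of_mem_x (mem_abEdges.2 ⟨hfF, Or.inr hcf⟩) hxf)
  -- the fan edges other than s(x,z) are untouched by the swap
  have huntouched : ∀ b ∈ y₀ :: t, b ≠ z → s(x, b) ∉ chainSet S x ∧ c₁ s(x, b) = c s(x, b) := by
    intro b hb hbz
    by_cases hbF : s(x, b) ∈ F
    · have hnotS : s(x, b) ∉ S := by
        intro hmem
        obtain ⟨-, hcol⟩ := mem_abEdges.1 hmem
        rcases hcol with h | h
        · exact hαx ⟨s(x, b), hbF, Sym2.mem_mk_left x b, h⟩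
        · have hne : s(x, b) ≠ s(x, z) := sym2_ne_of_ne (hnex b hb) hbz
          exact hc _ hbF _ he'F hne ⟨x, Sym2.mem_mk_left x b, Sym2.mem_mk_left x z⟩
            (h.trans hce'.symm)
      have hnotC : s(x, b) ∉ chainSet S x := fun h => hnotS (chainSet_subset h)
      exact ⟨hnotC, by rw [hc₁]; exact swapped_eq_of_not_mem hnotC⟩
    · have hnotC : s(x, b) ∉ chainSet S x := fun h => hbF (hSsub (chainSet_subset h))
      exact ⟨hnotC, by rw [hc₁]; exact swapped_eq_of_not_mem hnotC⟩
  -- transfer of fan chains not containing z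
  have htransfer : ∀ l : List V, (∀ b ∈ l, b ∈ y₀ :: t) → (∀ b ∈ l.tail, b ≠ z) →
      IsFanChain c F x l → IsFanChain c₁ F x l := by
    intro l hmem htne hch
    apply hch.transfer
    intro a ha b hb hbF hu
    have hb' : b ∈ l := List.mem_of_mem_tail hb
    obtain ⟨hnotC, heqc⟩ := huntouched b (hmem b hb') (htne b hb)
    refine ⟨hbF, heqc, ?_⟩
    have hγα : c s(x, b) ≠ α := fun h => hαx ⟨s(x, b), hbF, Sym2.mem_mk_left x b, h⟩
    have hγβ : c s(x, b) ≠ β := by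
      intro h
      have hne : s(x, b) ≠ s(x, z) := sym2_ne_of_ne (hnex b (hmem b hb')) (htne b hb)
      exact hc _ hbF _ he'F hne ⟨x, Sym2.mem_mk_left x b, Sym2.mem_mk_left x z⟩
        (h.trans hce'.symm)
    rw [hc₁]
    rw [← hc₁]
    intro hused
    exact hu ((swapped_usedAt_other hγα hγβ).1 (hc₁ ▸ hused))
  by_cases hRw : Reach S x w
  · -- w reachable, so yl is not: use the full fan under the swapped coloring
    have hRyl : ¬ Reach S x yl := fun h => hdich ⟨hRw, h⟩
    have hchainA : IsFanChain c₁ F x l₁ := by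
      apply htransfer l₁ (fun b hb => heq ▸ List.mem_append.2 (Or.inl hb))
        (fun b hb => hdisj b (List.mem_of_mem_tail hb) z List.mem_cons_self)
        (hchainS.prefix)
    have hchainB : IsFanChain c₁ F x (z :: l₂) := by
      apply htransfer (z :: l₂) (fun b hb => heq ▸ List.mem_append.2 (Or.inr hb))
        (fun b hb h => (List.nodup_cons.1 hndzl₂).1 (h ▸ hb))
        (hchainS.suffix)
    have hαw₁ : ¬ UsedAt c₁ F w α := by
      rintro ⟨f, hfF, hwf, hcf⟩
      by_cases hfC : f ∈ chainSet S x
      · obtain ⟨hfF', hcol⟩ := mem_abEdges.1 (chainSet_subset hfC)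
        rcases hcol with h | h
        · rw [hc₁] at hcf
          unfold swapped at hcf
          rw [if_pos hfC, h, Equiv.swap_apply_left] at hcf
          exact hαβ hcf.symm
        · exact hβw ⟨f, hfF, hwf, h⟩
      · rw [hc₁, swapped_eq_of_not_mem hfC] at hcf
        exact hfC (mem_chainSet.2 ⟨mem_abEdges.2 ⟨hfF, Or.inl hcf⟩, w, hwf, hRw⟩)
    have hcz : c₁ s(x, z) = α := by
      rw [hc₁]
      unfold swapped
      rw [if_pos he'C, hce', Equiv.swap_apply_right]
    have hchainF : IsFanChain c₁ F x (l₁ ++ z :: l₂) := by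
      apply hchainA.append_mid hl₁ne hchainB hxzF
      rw [hcz]
      exact hαw₁
    have hchainF' : IsFanChain c₁ F x (y₀ :: t) := heq ▸ hchainF
    have hβyl₁ : ¬ UsedAt c₁ F yl β :=
      fun h => hβyl ((swapped_usedAt_of_not_reach hRyl β).1 (hc₁ ▸ h))
    exact rotate t y₀ c₁ F hchainF' hnd hnex heF hprop₁ hβx₁ hβyl₁
  · -- w not reachable: use the truncated fan l₁ under the swapped coloring
    have hchainA : IsFanChain c₁ F x l₁ := by
      apply htransfer l₁ (fun b hb => heq ▸ List.mem_append.2 (Or.inl hb))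
        (fun b hb => hdisj b (List.mem_of_mem_tail hb) z List.mem_cons_self)
        (hchainS.prefix)
    have hβw₁ : ¬ UsedAt c₁ F w β :=
      fun h => hβw ((swapped_usedAt_of_not_reach hRw β).1 (hc₁ ▸ h))
    obtain ⟨t₁, hl₁eq⟩ : ∃ t₁, l₁ = y₀ :: t₁ := by
      cases l₁ with
      | nil => exact absurd rfl hl₁ne
      | cons a t₁ =>
        refine ⟨t₁, ?_⟩
        rw [List.cons_append] at heq
        injection heq with h1 h2
        rw [h1]
    rw [hl₁eq] at hchainA
    have hnd₁ : (y₀ :: t₁).Nodup := hl₁eq ▸ hndl₁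
    have hne₁ : ∀ z' ∈ y₀ :: t₁, z' ≠ x := by
      intro z' hz'
      exact hnex z' (heq ▸ List.mem_append.2 (Or.inl (hl₁eq ▸ hz')))
    have hlast₁ : (y₀ :: t₁).getLast (by simp) = w := by
      rw [hw]
      exact getLast_eq_of_eq hl₁eq.symm (by simp) hl₁ne
    have hβw₁' : ¬ UsedAt c₁ F ((y₀ :: t₁).getLast (by simp)) β := by
      rw [hlast₁]; exact hβw₁
    exact rotate t₁ y₀ c₁ F hchainA hnd₁ hne₁ heF hprop₁ hβx₁ hβw₁'
end Extend

end Vizing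

/-- Vizing: A graph with maximum degree `Δ` has a proper edge coloring
with `Δ + 1` colors; equivalently, its edge set partitions into at most `Δ + 1`
matchings. -/
theorem edgeSet_partitions_into_maxDegree_succ_matchings
    [Fintype V] [DecidableEq V] (G : SimpleGraph V) [DecidableRel G.Adj] :
    ∃ Ms : Fin (G.maxDegree + 1) → Finset (Sym2 V),
      IsKDisjointMatching G (G.maxDegree + 1) Ms ∧
      Finset.univ.biUnion Ms = G.edgeFinset := by
  classical
  have key : ∀ F : Finset (Sym2 V), F ⊆ G.edgeFinset →
      ∃ c, ProperColoringOn (G.maxDegree + 1) F c := by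
    intro F
    induction F using Finset.induction_on with
    | empty =>
      exact fun _ => ⟨fun _ => 0, fun e he => absurd he (Finset.notMem_empty e)⟩
    | @insert e F heF ih =>
      intro hsub
      have hF : F ⊆ G.edgeFinset := fun f hf => hsub (Finset.mem_insert_of_mem hf)
      obtain ⟨c, hc⟩ := ih hF
      exact Vizing.extend G hF hc (hsub (Finset.mem_insert_self _ _)) heF
  obtain ⟨c, hc⟩ := key G.edgeFinset (Finset.Subset.refl _)
  refine ⟨fun i => G.edgeFinset.filter (fun e => c e = i), ⟨fun i => ⟨?_, ?_⟩, ?_⟩, ?_⟩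
  · intro e he
    exact SimpleGraph.mem_edgeFinset.1 (Finset.mem_filter.1 he).1
  · intro e he f hf hne v hve hvf
    obtain ⟨heE, hce⟩ := Finset.mem_filter.1 he
    obtain ⟨hfE, hcf⟩ := Finset.mem_filter.1 hf
    exact hc e heE f hfE hne ⟨v, hve, hvf⟩ (hce.trans hcf.symm)
  · intro i j hij
    rw [Finset.disjoint_left]
    intro e he hf
    exact hij ((Finset.mem_filter.1 he).2.symm.trans (Finset.mem_filter.1 hf).2)
  · ext e
    simp only [Finset.mem_biUnion, Finset.mem_univ, true_and, Finset.mem_filter]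
    constructor
    · rintro ⟨i, hi, -⟩
      exact hi
    · intro he
      exact ⟨c e, he, rfl⟩
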